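/- Let x₀, x₁ ∈ ℝ³ and let v₀, v₁ ∈ ℝ³ be unit vectors that are not parallel. Let n be a unit vector, and for i = 0,1 set w_i = v_i - ⟨n, v_i⟩·n (the projections of the line directions onto the plane with normal n). Then w₀ × w₁ = 0 if and only if n lies in the span of v₀ and v₁. -/

import Mathlib

open Matrix

/-- Given non-parallel unit vectors v₀, v₁ in ℝ³ and a unit vector n, the
projections wᵢ = vᵢ - ⟨n,vᵢ⟩n satisfy w₀ × w₁ = 0 iff n ∈ span{v₀, v₁}. -/
theorem stmt_14 (x₀ x₁ v₀ v₁ n : Fin 3 → ℝ)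
    (hv₀ : v₀ ⬝ᵥ v₀ = 1) (hv₁ : v₁ ⬝ᵥ v₁ = 1) (hn : n ⬝ᵥ n = 1)
    (hpar : crossProduct v₀ v₁ ≠ 0) :
    crossProduct (v₀ - (n ⬝ᵥ v₀) • n) (v₁ - (n ⬝ᵥ v₁) • n) = 0 ↔
      n ∈ Submodule.span ℝ {v₀, v₁} := by
  have hn' : n ≠ 0 := by
    intro h; rw [h] at hn; simp at hn
  set c := crossProduct v₀ v₁ with hc
  have key : crossProduct (v₀ - (n ⬝ᵥ v₀) • n) (v₁ - (n ⬝ᵥ v₁) • n) = (n ⬝ᵥ c) • n := by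
    simp only [dotProduct, Fin.sum_univ_three] at hn ⊢
    funext i
    fin_cases i <;>
      simp [hc, crossProduct, dotProduct, Fin.sum_univ_three] <;> ring_nf <;>
      first
        | linear_combination (v₀ 1 * v₁ 2 - v₀ 2 * v₁ 1) * hn
        | linear_combination (v₀ 2 * v₁ 1 - v₀ 1 * v₁ 2) * hn
        | linear_combination (v₀ 2 * v₁ 0 - v₀ 0 * v₁ 2) * hn
        | linear_combination (v₀ 0 * v₁ 2 - v₀ 2 * v₁ 0) * hn
        | linear_combination (v₀ 0 * v₁ 1 - v₀ 1 * v₁ 0) * hn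
        | linear_combination (v₀ 1 * v₁ 0 - v₀ 0 * v₁ 1) * hn
  rw [key, smul_eq_zero, or_iff_left hn']
  constructor
  · intro hdot
    -- dimension argument
    have hli : LinearIndependent ℝ ![v₀, v₁] :=
      (crossProduct_ne_zero_iff_linearIndependent).mp hpar
    let φ : (Fin 3 → ℝ) →ₗ[ℝ] ℝ :=
      { toFun := fun x => c ⬝ᵥ x
        map_add' := fun x y => dotProduct_add c x y
        map_smul' := fun r x => by simp [dotProduct_smul] }
    have hcc : φ c ≠ 0 := by
      simp only [φ, LinearMap.coe_mk, AddHom.coe_mk]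
      rw [Ne, dotProduct_self_eq_zero]
      exact hpar
    have hrange : LinearMap.range φ = ⊤ := by
      rw [eq_top_iff]
      intro r _
      refine ⟨(r / φ c) • c, ?_⟩
      rw [φ.map_smul, smul_eq_mul, div_mul_cancel₀ _ hcc]
    have hker : Module.finrank ℝ (LinearMap.ker φ) = 2 := by
      have h1 := LinearMap.finrank_range_add_finrank_ker φ
      rw [hrange] at h1
      simp [Module.finrank_fintype_fun_eq_card, finrank_top] at h1
      omega
    have hspan : Submodule.span ℝ {v₀, v₁} = Submodule.span ℝ (Set.range ![v₀, v₁]) := by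
      congr 1
      ext x
      simp [Fin.exists_fin_two]
      tauto
    have hW : Module.finrank ℝ (Submodule.span ℝ {v₀, v₁}) = 2 := by
      rw [hspan, finrank_span_eq_card hli]
      simp
    have hle : Submodule.span ℝ {v₀, v₁} ≤ LinearMap.ker φ := by
      rw [Submodule.span_le]
      rintro x hx
      simp only [Set.mem_insert_iff, Set.mem_singleton_iff] at hx
      have hx0 : c ⬝ᵥ x = 0 := by
        rcases hx with h | h <;> rw [h, dotProduct_comm, hc]
        · exact dot_self_cross v₀ v₁
        · exact dot_cross_self v₀ v₁
      simp only [SetLike.mem_coe, LinearMap.mem_ker]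
      exact hx0
    have heq : Submodule.span ℝ {v₀, v₁} = LinearMap.ker φ :=
      Submodule.eq_of_le_of_finrank_le hle (by rw [hker, hW])
    rw [heq]
    show c ⬝ᵥ n = 0
    rw [dotProduct_comm]; exact hdot
  · intro hmem
    obtain ⟨a, b, hab⟩ := Submodule.mem_span_pair.mp hmem
    rw [← hab, add_dotProduct, smul_dotProduct, smul_dotProduct, hc,
      dot_self_cross, dot_cross_self]
    simp
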